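/- Let X be a circle-module over k. Then the Z/p-Gysin comparison map φ̃_p : X[t̃,θ̃] → X[t̃]⟨1,θ̃⟩ is a chain map, i.e., it commutes with the differentials of the two complexes. (This is the homotopy-orbit comparison map of Proposition 5.3 of the paper, realized on explicit complexes.) -/

import Mathlib

/-!
Common setup: circle-modules over a field `k` of characteristic `p`, and the explicit
homotopy-fixed-point complexes `X[[t]]`, `X[[t,θ]]`, `X[[t]]⟨1,θ⟩` together with the
`ℤ/p`-Gysin comparison map `φ_p`.
-/

variable {k : Type} [Field k] {p : ℕ}

/-- The sign `(-1)^n` as an element of `k`. -/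
def sgn (k : Type) [Field k] (n : ℤ) : k := if Even n then 1 else -1

/-- Cast along an equality of degrees. -/
def gcast (X : ℤ → ModuleCat k) {m n : ℤ} (h : m = n) : X m →ₗ[k] X n := by
  subst h; exact LinearMap.id

/-- A circle-module over `k`: a `ℤ`-graded cochain complex of `k`-vector spaces with a
degree-`0` chain automorphism `τ` satisfying `τ^p = 1`, and a degree-`(-1)` operator `σ`
satisfying `σ∘σ = 0`, `σ∘τ = τ∘σ` and `d∘σ + σ∘d = τ - 1`; i.e. a dg-module over the
dg-algebra `k[τ,σ]/(τ^p = 1, σ² = 0, τσ = στ)` with `dσ = τ - 1`. -/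
structure CircleModule (k : Type) [Field k] (p : ℕ) where
  X : ℤ → ModuleCat k
  d : ∀ n : ℤ, X n →ₗ[k] X (n + 1)
  tau : ∀ n : ℤ, X n →ₗ[k] X n
  sigma : ∀ n : ℤ, X n →ₗ[k] X (n - 1)
  d_comp_d : ∀ n : ℤ, (d (n + 1)).comp (d n) = 0
  d_comm_tau : ∀ n : ℤ, (d n).comp (tau n) = (tau (n + 1)).comp (d n)
  tau_pow_eq_one : ∀ n : ℤ, (tau n : Module.End k (X n)) ^ p = 1
  sigma_comp_sigma : ∀ n : ℤ, (sigma (n - 1)).comp (sigma n) = 0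
  sigma_comm_tau : ∀ n : ℤ, (sigma n).comp (tau n) = (tau (n - 1)).comp (sigma n)
  d_sigma_homotopy : ∀ n : ℤ,
    (gcast X (show n - 1 + 1 = n by omega)).comp ((d (n - 1)).comp (sigma n))
      + (gcast X (show n + 1 - 1 = n by omega)).comp ((sigma (n + 1)).comp (d n))
      = tau n - LinearMap.id

/-- The norm operator `N = 1 + τ + τ² + ⋯ + τ^{p-1}`. -/
def Nop (M : CircleModule k p) (n : ℤ) : M.X n →ₗ[k] M.X n :=
  (∑ i ∈ Finset.range p, (M.tau n : Module.End k (M.X n)) ^ i : Module.End k (M.X n))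

/-- The operator `(τ - 1)^m`. -/
def tauSubOnePow (M : CircleModule k p) (n : ℤ) (m : ℕ) : M.X n →ₗ[k] M.X n :=
  ((M.tau n - 1 : Module.End k (M.X n)) ^ m : Module.End k (M.X n))


/-- Degree-`n` part of the `S¹`-homotopy-orbit model `X[t̃]`:
`⊕_{j ≥ 0} X^{n+2j}` (the coefficient of `t̃^j` lies in `X^{n+2j}`, `|t̃| = -2`). -/
abbrev OrbT (M : CircleModule k p) (n : ℤ) : Type :=
  Π₀ j : ℕ, M.X (n + 2 * (j : ℤ))

/-- Degree-`n` part of the `ℤ/p`-homotopy-orbit model `X[t̃,θ̃]`: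
`(⊕_{j ≥ 0} X^{n+2j}) × (⊕_{j ≥ 0} X^{n+1+2j})` (coefficients of `t̃^j` and of `t̃^j θ̃`,
where `|t̃| = -2` and `|θ̃| = -1`). -/
abbrev OrbTheta (M : CircleModule k p) (n : ℤ) : Type :=
  OrbT M n × OrbT M (n + 1)

/-- Degree-`n` part of `X[t̃]⟨1,θ̃⟩ = X[t̃] ⊕ X[t̃]·θ̃`. -/
abbrev OrbShift (M : CircleModule k p) (n : ℤ) : Type :=
  OrbT M n × OrbT M (n + 1)

/-- The differential of `X[t̃]`: `x·t̃^j ↦ (dx)·t̃^j + N(σ(x))·t̃^{j-1}` for `j > 0`,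
and `x ↦ dx` for `j = 0`. -/
def orbTDiff (M : CircleModule k p) (n : ℤ) : OrbT M n →ₗ[k] OrbT M (n + 1) :=
  DFinsupp.lsum ℕ fun j =>
    (DFinsupp.lsingle j).comp
      ((gcast M.X (show n + 2 * (j : ℤ) + 1 = n + 1 + 2 * (j : ℤ) by omega)).comp
        (M.d (n + 2 * (j : ℤ))))
    + if h : j = 0 then 0 else
        (DFinsupp.lsingle (j - 1)).comp
          ((gcast M.X
              (show n + 2 * (j : ℤ) - 1 = n + 1 + 2 * ((j - 1 : ℕ) : ℤ) by omega)).comp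
            ((Nop M (n + 2 * (j : ℤ) - 1)).comp (M.sigma (n + 2 * (j : ℤ)))))

/-- The differential of `X[t̃,θ̃]`: on homogeneous `x ∈ X`,
`x·t̃^j ↦ (dx)·t̃^j + (-1)^{|x|} N(x)·t̃^{j-1}θ̃` (for `j > 0`; `x ↦ dx` for `j = 0`) and
`x·t̃^j θ̃ ↦ (dx)·t̃^j θ̃ + (-1)^{|x|}(τ - 1)(x)·t̃^j`. -/
def orbThetaDiff (M : CircleModule k p) (n : ℤ) : OrbTheta M n →ₗ[k] OrbTheta M (n + 1) :=
  LinearMap.coprod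
    (DFinsupp.lsum ℕ fun j =>
      LinearMap.prod
        ((DFinsupp.lsingle j).comp
          ((gcast M.X (show n + 2 * (j : ℤ) + 1 = n + 1 + 2 * (j : ℤ) by omega)).comp
            (M.d (n + 2 * (j : ℤ)))))
        (if h : j = 0 then 0 else
          sgn k n •
            (DFinsupp.lsingle (j - 1)).comp
              ((gcast M.X
                  (show n + 2 * (j : ℤ) = n + 1 + 1 + 2 * ((j - 1 : ℕ) : ℤ) by omega)).comp
                (Nop M (n + 2 * (j : ℤ))))))
    (DFinsupp.lsum ℕ fun j =>
      LinearMap.prod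
        (sgn k (n + 1) •
          (DFinsupp.lsingle j).comp (M.tau (n + 1 + 2 * (j : ℤ)) - LinearMap.id))
        ((DFinsupp.lsingle j).comp
          ((gcast M.X
              (show n + 1 + 2 * (j : ℤ) + 1 = n + 1 + 1 + 2 * (j : ℤ) by omega)).comp
            (M.d (n + 1 + 2 * (j : ℤ))))))

/-- The differential of `X[t̃]⟨1,θ̃⟩`, acting as the differential of `X[t̃]` on each of the two
summands (transported along the degree shift on the `θ̃`-summand). -/
def orbShiftDiff (M : CircleModule k p) (n : ℤ) : OrbShift M n →ₗ[k] OrbShift M (n + 1) :=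
  LinearMap.prodMap (orbTDiff M n) (orbTDiff M (n + 1))

/-- The `ℤ/p`-Gysin comparison map `φ̃_p : X[t̃,θ̃] → X[t̃]⟨1,θ̃⟩`: on homogeneous `x ∈ X`,
`x·t̃^j ↦ x·t̃^j + (-1)^{|x|}(τ - 1)^{p-2}(σ(x))·t̃^{j-1}θ̃` (for `j > 0`; `x ↦ x` for `j = 0`)
and `x·t̃^j θ̃ ↦ x·t̃^j θ̃ + (-1)^{|x|} σ(x)·t̃^j`. -/
def gysinOrb (M : CircleModule k p) (n : ℤ) : OrbTheta M n →ₗ[k] OrbShift M n :=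
  LinearMap.coprod
    (DFinsupp.lsum ℕ fun j =>
      LinearMap.prod
        (DFinsupp.lsingle (M := fun i : ℕ => M.X (n + 2 * (i : ℤ))) j)
        (if h : j = 0 then 0 else
          sgn k n •
            (DFinsupp.lsingle (j - 1)).comp
              ((gcast M.X
                  (show n + 2 * (j : ℤ) - 1 = n + 1 + 2 * ((j - 1 : ℕ) : ℤ) by omega)).comp
                ((tauSubOnePow M (n + 2 * (j : ℤ) - 1) (p - 2)).comp
                  (M.sigma (n + 2 * (j : ℤ)))))))
    (DFinsupp.lsum ℕ fun j =>
      LinearMap.prod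
        (sgn k (n + 1) •
          (DFinsupp.lsingle j).comp
            ((gcast M.X (show n + 1 + 2 * (j : ℤ) - 1 = n + 2 * (j : ℤ) by omega)).comp
              (M.sigma (n + 1 + 2 * (j : ℤ)))))
        (DFinsupp.lsingle (M := fun i : ℕ => M.X (n + 1 + 2 * (i : ℤ))) j))

/-- Cast along an equality of degrees for `X[t̃]`. -/
def ocast (M : CircleModule k p) {m n : ℤ} (h : m = n) : OrbT M m →ₗ[k] OrbT M n := by
  subst h; exact LinearMap.id

/-- Cast along an equality of degrees for `X[t̃,θ̃]`. -/
def orbThetaCast (M : CircleModule k p) {m n : ℤ} (h : m = n) :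
    OrbTheta M m →ₗ[k] OrbTheta M n := by
  subst h; exact LinearMap.id

/-- Cast along an equality of degrees for `X[t̃]⟨1,θ̃⟩`. -/
def orbShiftCast (M : CircleModule k p) {m n : ℤ} (h : m = n) :
    OrbShift M m →ₗ[k] OrbShift M n := by
  subst h; exact LinearMap.id

section Aux

@[simp] theorem gcast_rfl {X : ℤ → ModuleCat k} {n : ℤ} (h : n = n) (x : X n) :
    gcast X h x = x := rfl

@[simp] theorem gcast_gcast {X : ℤ → ModuleCat k} {a b c : ℤ} (h1 : a = b) (h2 : b = c)
    (x : X a) : gcast X h2 (gcast X h1 x) = gcast X (h1.trans h2) x := by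
  subst h1; subst h2; rfl

variable (M : CircleModule k p)

@[simp] theorem d_gcast {a b : ℤ} (h : a = b) (x : M.X a) :
    M.d b (gcast M.X h x) = gcast M.X (by rw [h]) (M.d a x) := by subst h; rfl

@[simp] theorem sigma_gcast {a b : ℤ} (h : a = b) (x : M.X a) :
    M.sigma b (gcast M.X h x) = gcast M.X (by rw [h]) (M.sigma a x) := by subst h; rfl

@[simp] theorem tau_gcast {a b : ℤ} (h : a = b) (x : M.X a) :
    M.tau b (gcast M.X h x) = gcast M.X h (M.tau a x) := by subst h; rfl

@[simp] theorem tauSubOnePow_gcast {a b : ℤ} (h : a = b) (i : ℕ) (x : M.X a) :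
    tauSubOnePow M b i (gcast M.X h x) = gcast M.X h (tauSubOnePow M a i x) := by subst h; rfl

@[simp] theorem Nop_gcast {a b : ℤ} (h : a = b) (x : M.X a) :
    Nop M b (gcast M.X h x) = gcast M.X h (Nop M a x) := by subst h; rfl

theorem dsh_apply (a : ℤ) (x : M.X a) :
    gcast M.X (show a - 1 + 1 = a by omega) (M.d (a - 1) (M.sigma a x))
      + gcast M.X (show a + 1 - 1 = a by omega) (M.sigma (a + 1) (M.d a x))
      = M.tau a x - x := by
  have := LinearMap.congr_fun (M.d_sigma_homotopy a) x
  simpa using this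

theorem d_tau_apply (a : ℤ) (x : M.X a) :
    M.d a (M.tau a x) = M.tau (a + 1) (M.d a x) :=
  LinearMap.congr_fun (M.d_comm_tau a) x

theorem sigma_tau_apply (a : ℤ) (x : M.X a) :
    M.sigma a (M.tau a x) = M.tau (a - 1) (M.sigma a x) :=
  LinearMap.congr_fun (M.sigma_comm_tau a) x

theorem sigma_sigma_apply (a : ℤ) (x : M.X a) :
    M.sigma (a - 1) (M.sigma a x) = 0 :=
  LinearMap.congr_fun (M.sigma_comp_sigma a) x

@[simp] theorem tauSubOnePow_zero_apply (a : ℤ) (x : M.X a) :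
    tauSubOnePow M a 0 x = x := by
  simp [tauSubOnePow]

theorem tauSubOnePow_succ_apply (a : ℤ) (i : ℕ) (x : M.X a) :
    tauSubOnePow M a (i + 1) x = tauSubOnePow M a i (M.tau a x - x) := by
  unfold tauSubOnePow
  rw [pow_succ, Module.End.mul_apply, LinearMap.sub_apply, Module.End.one_apply]

theorem d_pow_apply (a : ℤ) (i : ℕ) (x : M.X a) :
    M.d a (tauSubOnePow M a i x) = tauSubOnePow M (a + 1) i (M.d a x) := by
  induction i generalizing x with
  | zero => simp
  | succ i ih =>
      rw [tauSubOnePow_succ_apply, ih, tauSubOnePow_succ_apply, map_sub, d_tau_apply]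

theorem sigma_pow_apply (a : ℤ) (i : ℕ) (x : M.X a) :
    M.sigma a (tauSubOnePow M a i x) = tauSubOnePow M (a - 1) i (M.sigma a x) := by
  induction i generalizing x with
  | zero => simp
  | succ i ih =>
      rw [tauSubOnePow_succ_apply, ih, tauSubOnePow_succ_apply, map_sub, sigma_tau_apply]

open Polynomial in
theorem geom_poly_identity (hp : p.Prime) [CharP k p] :
    (∑ i ∈ Finset.range p, (X : Polynomial k) ^ i) = (X - 1) ^ (p - 1) := by
  haveI := Fact.mk hp
  have hX : (X - 1 : Polynomial k) ≠ 0 := by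
    intro h
    rw [sub_eq_zero] at h
    exact Polynomial.X_ne_C (R := k) 1 (by rw [Polynomial.C_1]; exact h)
  apply mul_left_cancel₀ hX
  rw [mul_geom_sum]
  have h2 : ((X : Polynomial k) - 1) ^ p = X ^ p - 1 := by
    rw [sub_pow_char]; simp
  rw [← h2]
  exact (mul_pow_sub_one hp.ne_zero _).symm

theorem Nop_eq (hp : p.Prime) [CharP k p] (a : ℤ) :
    Nop M a = tauSubOnePow M a (p - 1) := by
  have := congrArg (Polynomial.aeval (M.tau a : Module.End k (M.X a))) (geom_poly_identity (k := k) hp)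
  unfold Nop tauSubOnePow
  simpa [map_sum, map_pow, map_sub] using this

/-- `N(σ x) = σ (N x)` -/
theorem Nop_sigma_apply (hp : p.Prime) [CharP k p] (a : ℤ) (x : M.X a) :
    Nop M (a - 1) (M.sigma a x) = M.sigma a (Nop M a x) := by
  rw [Nop_eq M hp, Nop_eq M hp, sigma_pow_apply]

/-- `σ (T^i (σ x)) = 0` -/
theorem sigma_pow_sigma_apply (a : ℤ) (i : ℕ) (x : M.X a) :
    M.sigma (a - 1) (tauSubOnePow M (a - 1) i (M.sigma a x)) = 0 := by
  rw [sigma_pow_apply, sigma_sigma_apply, map_zero]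

/-- Key identity: `d(T^{p-2}(σ x)) + T^{p-2}(σ(d x)) = N x`. -/
theorem key_dPsigma (hp : p.Prime) (hodd : Odd p) [CharP k p] {a b : ℤ}
    (h1 : a - 1 + 1 = b) (h2 : a + 1 - 1 = b) (h3 : a = b) (x : M.X a) :
    gcast M.X h1 (M.d (a - 1) (tauSubOnePow M (a - 1) (p - 2) (M.sigma a x)))
      + gcast M.X h2 (tauSubOnePow M (a + 1 - 1) (p - 2) (M.sigma (a + 1) (M.d a x)))
      = gcast M.X h3 (Nop M a x) := by
  subst h3
  have hp3 : 3 ≤ p := hp.two_le.lt_of_ne (by rintro rfl; exact (Nat.not_odd_iff_even.mpr (by decide)) hodd)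
  have key := congrArg (tauSubOnePow M a (p - 2)) (dsh_apply M a x)
  rw [map_add, tauSubOnePow_gcast, tauSubOnePow_gcast] at key
  rw [d_pow_apply, Nop_eq M hp, show p - 1 = (p - 2) + 1 by omega,
    tauSubOnePow_succ_apply, gcast_rfl]
  exact key

/-- `N(σ x) = T^{p-2}(σ(τ x - x))`. -/
theorem key_Nsigma (hp : p.Prime) (hodd : Odd p) [CharP k p] (a : ℤ) (x : M.X a) :
    Nop M (a - 1) (M.sigma a x)
      = tauSubOnePow M (a - 1) (p - 2) (M.sigma a (M.tau a x - x)) := by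
  have hp3 : 3 ≤ p := hp.two_le.lt_of_ne (by rintro rfl; exact (Nat.not_odd_iff_even.mpr (by decide)) hodd)
  rw [map_sub, sigma_tau_apply, Nop_eq M hp,
    show p - 1 = (p - 2) + 1 by omega, tauSubOnePow_succ_apply, map_sub]

@[simp] theorem sgn_succ (n : ℤ) : sgn k (n + 1) = -sgn k n := by
  unfold sgn
  rcases Int.even_or_odd n with h | h
  · simp [h, Int.even_add_one, Int.not_even_iff_odd, Int.not_even_iff_odd.mpr (Even.add_one h)]
  · simp [Int.not_even_iff_odd.mpr h, Int.even_add_one.mpr (Int.not_even_iff_odd.mpr h)]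

theorem sgn_mul_self (n : ℤ) : sgn k n * sgn k n = 1 := by
  unfold sgn; split <;> ring

theorem sgn_smul_sgn {V : Type*} [AddCommGroup V] [Module k V] (n m : ℤ)
    (h : n % 2 = m % 2) (v : V) : sgn k n • sgn k m • v = v := by
  have : sgn k n = sgn k m := by
    unfold sgn
    have : Even n ↔ Even m := by constructor <;> intro ⟨c, hc⟩ <;> exact ⟨(n+m)/2 - c, by omega⟩
    rcases em (Even m) with h' | h'
    · simp [h', this.mpr h']
    · simp [h', (not_iff_not.mpr this).mpr h']
  rw [this, smul_smul, sgn_mul_self, one_smul]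

end Aux

set_option maxHeartbeats 1600000 in
/-- For any circle-module `X` over a field `k` of odd prime characteristic `p`,
the `ℤ/p`-Gysin comparison map `φ̃_p : X[t̃,θ̃] → X[t̃]⟨1,θ̃⟩` is a chain map: it commutes with
the differentials of the two complexes. -/
theorem gysinOrb_chainMap (hp : p.Prime) (hodd : Odd p) [CharP k p]
    (M : CircleModule k p) (n : ℤ) :
    (orbShiftDiff M n).comp (gysinOrb M n) = (gysinOrb M (n + 1)).comp (orbThetaDiff M n) := by
  refine LinearMap.prod_ext (DFinsupp.lhom_ext' fun j => LinearMap.ext fun x => ?_)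
    (DFinsupp.lhom_ext' fun j => LinearMap.ext fun x => ?_)
  · rcases j with _ | j
    · simp only [orbShiftDiff, gysinOrb, orbThetaDiff, orbTDiff, LinearMap.comp_apply,
        LinearMap.coprod_apply, LinearMap.inl_apply, LinearMap.inr_apply, DFinsupp.lsum_single,
        LinearMap.prod_apply, Pi.prod, Function.prod_apply, LinearMap.add_apply, LinearMap.smul_apply, map_add,
        map_smul, LinearMap.prodMap_apply, Prod.map, Prod.mk_add_mk, Prod.smul_mk, map_zero,
        LinearMap.zero_apply, Prod.fst_add, Prod.snd_add, DFinsupp.sumAddHom_single,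
        DFinsupp.lsingle_apply, LinearMap.toAddMonoidHom_coe, add_zero, zero_add,
        Nat.succ_ne_zero, dif_pos, dif_neg, Nat.succ_sub_one, not_false_iff, smul_zero,
        Prod.fst_zero, Prod.snd_zero, DFinsupp.single_zero, ← DFinsupp.single_smul,
        gcast_gcast, d_gcast, sigma_gcast, tau_gcast, tauSubOnePow_gcast, Nop_gcast, gcast_rfl]
    · rcases eq_or_ne j 0 with rfl | hj
      · simp only [orbShiftDiff, gysinOrb, orbThetaDiff, orbTDiff, LinearMap.comp_apply,
        LinearMap.coprod_apply, LinearMap.inl_apply, LinearMap.inr_apply, DFinsupp.lsum_single,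
        LinearMap.prod_apply, Pi.prod, Function.prod_apply, LinearMap.add_apply, LinearMap.smul_apply, map_add,
        map_smul, LinearMap.prodMap_apply, Prod.map, Prod.mk_add_mk, Prod.smul_mk, map_zero,
        LinearMap.zero_apply, Prod.fst_add, Prod.snd_add, DFinsupp.sumAddHom_single,
        DFinsupp.lsingle_apply, LinearMap.toAddMonoidHom_coe, add_zero, zero_add,
        Nat.succ_ne_zero, dif_pos, dif_neg, Nat.succ_sub_one, not_false_iff, smul_zero,
        Prod.fst_zero, Prod.snd_zero, DFinsupp.single_zero, ← DFinsupp.single_smul,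
        gcast_gcast, d_gcast, sigma_gcast, tau_gcast, tauSubOnePow_gcast, Nop_gcast, gcast_rfl]
        simp only [smul_add, sgn_succ, neg_neg, smul_smul, neg_mul_neg, sgn_mul_self, one_smul,
        sigma_pow_sigma_apply, sigma_sigma_apply, Nop_sigma_apply M hp, key_Nsigma M hp hodd,
        map_zero, DFinsupp.single_zero, add_zero, LinearMap.sub_apply, LinearMap.id_apply,
        LinearMap.comp_apply, DFinsupp.lsingle_apply, sigma_gcast, gcast_gcast, Nop_gcast,
        tauSubOnePow_gcast, tau_gcast, d_gcast, gcast_rfl, ← DFinsupp.single_smul,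
        ← DFinsupp.single_add, neg_smul, Prod.mk.injEq, and_true, true_and]
        refine congrArg _ ?_
        have K := key_dPsigma M hp hodd
          (show n + 2 * (((0 : ℕ) + 1 : ℕ) : ℤ) - 1 + 1 = n + 1 + 1 + 2 * ((0 : ℕ) : ℤ) by omega)
          (show n + 2 * (((0 : ℕ) + 1 : ℕ) : ℤ) + 1 - 1 = n + 1 + 1 + 2 * ((0 : ℕ) : ℤ) by omega)
          (show n + 2 * (((0 : ℕ) + 1 : ℕ) : ℤ) = n + 1 + 1 + 2 * ((0 : ℕ) : ℤ) by omega) x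
        rw [← K]
        module
      · simp only [orbShiftDiff, gysinOrb, orbThetaDiff, orbTDiff, LinearMap.comp_apply,
        LinearMap.coprod_apply, LinearMap.inl_apply, LinearMap.inr_apply, DFinsupp.lsum_single,
        LinearMap.prod_apply, Pi.prod, Function.prod_apply, LinearMap.add_apply, LinearMap.smul_apply, map_add,
        map_smul, LinearMap.prodMap_apply, Prod.map, Prod.mk_add_mk, Prod.smul_mk, map_zero,
        LinearMap.zero_apply, Prod.fst_add, Prod.snd_add, DFinsupp.sumAddHom_single,
        DFinsupp.lsingle_apply, LinearMap.toAddMonoidHom_coe, add_zero, zero_add,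
        Nat.succ_ne_zero, dif_pos, dif_neg, Nat.succ_sub_one, not_false_iff, smul_zero,
        Prod.fst_zero, Prod.snd_zero, DFinsupp.single_zero, ← DFinsupp.single_smul,
        gcast_gcast, d_gcast, sigma_gcast, tau_gcast, tauSubOnePow_gcast, Nop_gcast, gcast_rfl]
        rw [dif_neg hj]
        simp only [smul_add, sgn_succ, neg_neg, smul_smul, neg_mul_neg, sgn_mul_self, one_smul,
        sigma_pow_sigma_apply, sigma_sigma_apply, Nop_sigma_apply M hp, key_Nsigma M hp hodd,
        map_zero, DFinsupp.single_zero, add_zero, LinearMap.sub_apply, LinearMap.id_apply,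
        LinearMap.comp_apply, DFinsupp.lsingle_apply, sigma_gcast, gcast_gcast, Nop_gcast,
        tauSubOnePow_gcast, tau_gcast, d_gcast, gcast_rfl, ← DFinsupp.single_smul,
        ← DFinsupp.single_add, neg_smul, Prod.mk.injEq, and_true, true_and]
        refine congrArg _ ?_
        have K := key_dPsigma M hp hodd
          (show n + 2 * (((j : ℕ) + 1 : ℕ) : ℤ) - 1 + 1 = n + 1 + 1 + 2 * ((j : ℕ) : ℤ) by omega)
          (show n + 2 * (((j : ℕ) + 1 : ℕ) : ℤ) + 1 - 1 = n + 1 + 1 + 2 * ((j : ℕ) : ℤ) by omega)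
          (show n + 2 * (((j : ℕ) + 1 : ℕ) : ℤ) = n + 1 + 1 + 2 * ((j : ℕ) : ℤ) by omega) x
        rw [← K]
        module
  · rcases j with _ | j
    · simp only [orbShiftDiff, gysinOrb, orbThetaDiff, orbTDiff, LinearMap.comp_apply,
        LinearMap.coprod_apply, LinearMap.inl_apply, LinearMap.inr_apply, DFinsupp.lsum_single,
        LinearMap.prod_apply, Pi.prod, Function.prod_apply, LinearMap.add_apply, LinearMap.smul_apply, map_add,
        map_smul, LinearMap.prodMap_apply, Prod.map, Prod.mk_add_mk, Prod.smul_mk, map_zero,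
        LinearMap.zero_apply, Prod.fst_add, Prod.snd_add, DFinsupp.sumAddHom_single,
        DFinsupp.lsingle_apply, LinearMap.toAddMonoidHom_coe, add_zero, zero_add,
        Nat.succ_ne_zero, dif_pos, dif_neg, Nat.succ_sub_one, not_false_iff, smul_zero,
        Prod.fst_zero, Prod.snd_zero, DFinsupp.single_zero, ← DFinsupp.single_smul,
        gcast_gcast, d_gcast, sigma_gcast, tau_gcast, tauSubOnePow_gcast, Nop_gcast, gcast_rfl]
      simp only [smul_add, sgn_succ, neg_neg, smul_smul, neg_mul_neg, sgn_mul_self, one_smul,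
        sigma_pow_sigma_apply, sigma_sigma_apply, Nop_sigma_apply M hp, key_Nsigma M hp hodd,
        map_zero, DFinsupp.single_zero, add_zero, LinearMap.sub_apply, LinearMap.id_apply,
        LinearMap.comp_apply, DFinsupp.lsingle_apply, sigma_gcast, gcast_gcast, Nop_gcast,
        tauSubOnePow_gcast, tau_gcast, d_gcast, gcast_rfl, ← DFinsupp.single_smul,
        ← DFinsupp.single_add, neg_smul, Prod.mk.injEq, and_true, true_and]
      refine congrArg _ ?_
      rw [← dsh_apply M (n + 1 + 2 * ((0 : ℕ) : ℤ)) x]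
      module
    · simp only [orbShiftDiff, gysinOrb, orbThetaDiff, orbTDiff, LinearMap.comp_apply,
        LinearMap.coprod_apply, LinearMap.inl_apply, LinearMap.inr_apply, DFinsupp.lsum_single,
        LinearMap.prod_apply, Pi.prod, Function.prod_apply, LinearMap.add_apply, LinearMap.smul_apply, map_add,
        map_smul, LinearMap.prodMap_apply, Prod.map, Prod.mk_add_mk, Prod.smul_mk, map_zero,
        LinearMap.zero_apply, Prod.fst_add, Prod.snd_add, DFinsupp.sumAddHom_single,
        DFinsupp.lsingle_apply, LinearMap.toAddMonoidHom_coe, add_zero, zero_add,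
        Nat.succ_ne_zero, dif_neg, Nat.succ_sub_one, not_false_iff, smul_zero,
        Prod.fst_zero, Prod.snd_zero, DFinsupp.single_zero, ← DFinsupp.single_smul,
        gcast_gcast, d_gcast, sigma_gcast, tau_gcast, tauSubOnePow_gcast, Nop_gcast, gcast_rfl]
      simp only [smul_add, sgn_succ, neg_neg, smul_smul, neg_mul_neg, sgn_mul_self, one_smul,
        sigma_pow_sigma_apply, sigma_sigma_apply, smul_neg, neg_mul, mul_neg,
        map_zero, DFinsupp.single_zero, add_zero, LinearMap.sub_apply, LinearMap.id_apply,
        LinearMap.comp_apply, DFinsupp.lsingle_apply, sigma_gcast, gcast_gcast, Nop_gcast,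
        tauSubOnePow_gcast, tau_gcast, d_gcast, gcast_rfl, ← DFinsupp.single_smul,
        ← DFinsupp.single_add, ← DFinsupp.single_neg, neg_smul, Prod.mk.injEq, and_true, true_and]
      refine ⟨congrArg _ ?_, ?_⟩
      · rw [← dsh_apply M (n + 1 + 2 * (((j : ℕ) + 1 : ℕ) : ℤ)) x]
        module
      · rw [key_Nsigma M hp hodd]
        exact (add_comm _ _).trans rfl
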